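/- Let f be an isometry from a possibly non-symmetric metric space (X,d) with base-point b to (X',d') with base-point b'. Then the detour costs are related by H'(f·ξ, f·η) = ξ(f⁻¹(b')) + H(ξ,η) − η(f⁻¹(b')) for all horofunctions ξ, η of X, where f·ξ(x') = ξ(f⁻¹(x')) − ξ(f⁻¹(b')). In particular, the detour metric satisfies δ'(f·ξ, f·η) = δ(ξ,η). -/

import Mathlib

/-- The detour cost `H(ξ,η)`, valued in `EReal`. -/
noncomputable def detourCost {X : Type*} (d : X → X → ℝ) (b : X) (ξ η : X → ℝ) : EReal :=
  sInf { c : EReal | ∃ z : ℕ → X,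
    (∀ x, Filter.Tendsto (fun n => d x (z n) - d b (z n)) Filter.atTop (nhds (ξ x))) ∧
    c = Filter.liminf (fun n => ((d b (z n) + η (z n) : ℝ) : EReal)) Filter.atTop }

/-- The detour metric `δ(ξ,η) = H(ξ,η) + H(η,ξ)`. -/
noncomputable def detourMetric {X : Type*} (d : X → X → ℝ) (b : X) (ξ η : X → ℝ) : EReal :=
  detourCost d b ξ η + detourCost d b η ξ

open Filter

lemma liminf_add_coe_tendsto (u : ℕ → EReal) (t : ℕ → ℝ) (a : ℝ)
    (ht : Tendsto t atTop (nhds a)) :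
    liminf (fun n => u n + (t n : EReal)) atTop = liminf u atTop + (a : EReal) := by
  have htc : Tendsto (fun n => ((t n : ℝ) : EReal)) atTop (nhds (a : EReal)) :=
    EReal.tendsto_coe.2 ht
  have h1 : liminf (fun n => ((t n : ℝ) : EReal)) atTop = (a : EReal) := htc.liminf_eq
  have h2 : limsup (fun n => ((t n : ℝ) : EReal)) atTop = (a : EReal) := htc.limsup_eq
  apply le_antisymm
  · have h := EReal.liminf_add_le (f := atTop) (u := fun n => ((t n : ℝ) : EReal)) (v := u)
      (Or.inl (h2 ▸ EReal.coe_ne_bot a)) (Or.inl (h2 ▸ EReal.coe_ne_top a))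
    rw [h2] at h
    have heq : ((fun n => ((t n : ℝ) : EReal)) + u) = fun n => u n + (t n : EReal) := by
      funext n; simp [add_comm]
    rw [heq] at h
    rw [add_comm (liminf u atTop)]
    exact h
  · have h := EReal.le_liminf_add (f := atTop) (u := u) (v := fun n => ((t n : ℝ) : EReal))
    rw [h1] at h
    have heq : (u + fun n => ((t n : ℝ) : EReal)) = fun n => u n + (t n : EReal) := by
      funext n; simp
    rw [heq] at h
    exact h

lemma sInf_add_coe (S : Set EReal) (a : ℝ) :
    sInf ((fun x => x + (a : EReal)) '' S) = sInf S + (a : EReal) := by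
  apply le_antisymm
  · have h : sInf ((fun x => x + (a : EReal)) '' S) + ((-a : ℝ) : EReal) ≤ sInf S := by
      apply le_sInf
      intro c hc
      have h1 : sInf ((fun x => x + (a : EReal)) '' S) ≤ c + (a : EReal) :=
        sInf_le ⟨c, hc, rfl⟩
      calc sInf ((fun x => x + (a : EReal)) '' S) + ((-a : ℝ) : EReal)
          ≤ (c + (a : EReal)) + ((-a : ℝ) : EReal) := add_le_add_left h1 _
        _ = c := by rw [add_assoc, ← EReal.coe_add, add_neg_cancel, EReal.coe_zero, add_zero]
    calc sInf ((fun x => x + (a : EReal)) '' S)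
        = sInf ((fun x => x + (a : EReal)) '' S) + ((-a : ℝ) : EReal) + (a : EReal) := by
          rw [add_assoc, ← EReal.coe_add, neg_add_cancel, EReal.coe_zero, add_zero]
      _ ≤ sInf S + (a : EReal) := add_le_add_left h _
  · apply le_sInf
    rintro y ⟨c, hc, rfl⟩
    exact add_le_add_left (sInf_le hc) _

lemma detourCost_isometry_aux {X X' : Type*}
    (d : X → X → ℝ) (d' : X' → X' → ℝ) (b : X) (b' : X')
    (e : X ≃ X') (he : ∀ x y, d' (e x) (e y) = d x y)
    (ξ η : X → ℝ) (hξb : ξ b = 0) :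
    detourCost d' b' (fun x' => ξ (e.symm x') - ξ (e.symm b'))
        (fun x' => η (e.symm x') - η (e.symm b'))
      = detourCost d b ξ η + ((ξ (e.symm b') - η (e.symm b') : ℝ) : EReal) := by
  have hd' : ∀ x' y', d' x' y' = d (e.symm x') (e.symm y') := fun x' y' => by
    conv_lhs => rw [← e.apply_symm_apply x', ← e.apply_symm_apply y']
    rw [he]
  rw [detourCost, detourCost, ← sInf_add_coe]
  congr 1
  ext c
  constructor
  · rintro ⟨w, hw, rfl⟩
    set z : ℕ → X := fun n => e.symm (w n) with hz_def
    have hw' : ∀ x', Tendsto (fun n => d (e.symm x') (z n) - d (e.symm b') (z n)) atTop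
        (nhds (ξ (e.symm x') - ξ (e.symm b'))) := by
      intro x'
      have := hw x'
      simpa only [hd'] using this
    have hzb : Tendsto (fun n => d (e.symm b') (z n) - d b (z n)) atTop
        (nhds (ξ (e.symm b'))) := by
      have h0 := hw' (e b)
      simp only [e.symm_apply_apply, hξb] at h0
      simpa only [neg_sub, zero_sub, neg_neg] using h0.neg
    have hz : ∀ x, Tendsto (fun n => d x (z n) - d b (z n)) atTop (nhds (ξ x)) := by
      intro x
      have h1 := (hw' (e x)).add hzb
      simp only [e.symm_apply_apply, sub_add_sub_cancel, sub_add_cancel] at h1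
      exact h1
    refine ⟨liminf (fun n => ((d b (z n) + η (z n) : ℝ) : EReal)) atTop, ⟨z, hz, rfl⟩, ?_⟩
    have ht : Tendsto (fun n => (d (e.symm b') (z n) - d b (z n)) - η (e.symm b')) atTop
        (nhds (ξ (e.symm b') - η (e.symm b'))) := hzb.sub_const _
    have hfun : (fun n => ((d' b' (w n) + (η (e.symm (w n)) - η (e.symm b')) : ℝ) : EReal))
        = fun n => ((d b (z n) + η (z n) : ℝ) : EReal)
            + (((d (e.symm b') (z n) - d b (z n)) - η (e.symm b') : ℝ) : EReal) := by
      funext n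
      rw [← EReal.coe_add]
      congr 1
      rw [hd']
      ring
    rw [hfun, liminf_add_coe_tendsto _ _ _ ht]
  · rintro ⟨c, ⟨z, hz, rfl⟩, rfl⟩
    refine ⟨fun n => e (z n), ?_, ?_⟩
    · intro x'
      have h1 := (hz (e.symm x')).sub (hz (e.symm b'))
      simp only [hd', e.symm_apply_apply]
      simpa only [sub_sub_sub_cancel_right] using h1
    · have ht : Tendsto (fun n => (d (e.symm b') (z n) - d b (z n)) - η (e.symm b')) atTop
          (nhds (ξ (e.symm b') - η (e.symm b'))) := (hz (e.symm b')).sub_const _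
      have hfun : (fun n => ((d' b' (e (z n)) + (η (e.symm (e (z n))) - η (e.symm b')) : ℝ) : EReal))
          = fun n => ((d b (z n) + η (z n) : ℝ) : EReal)
              + (((d (e.symm b') (z n) - d b (z n)) - η (e.symm b') : ℝ) : EReal) := by
        funext n
        rw [← EReal.coe_add]
        congr 1
        simp only [hd', e.symm_apply_apply]
        ring
      rw [hfun, liminf_add_coe_tendsto _ _ _ ht]

/-- an isometry `f` between possibly non-symmetric metric spaces transforms
the detour cost by `H'(f·ξ, f·η) = ξ(f⁻¹ b') + H(ξ,η) - η(f⁻¹ b')`, where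
`f·ξ (x') = ξ (f⁻¹ x') - ξ (f⁻¹ b')`; in particular `δ'(f·ξ, f·η) = δ(ξ,η)`. -/
theorem detourCost_isometry_invariance {X X' : Type*}
    (d : X → X → ℝ) (d' : X' → X' → ℝ) (b : X) (b' : X')
    (hpos : ∀ x y, 0 ≤ d x y) (hzero : ∀ x y, d x y = 0 ↔ x = y)
    (htri : ∀ x y z, d x z ≤ d x y + d y z)
    (hpos' : ∀ x y, 0 ≤ d' x y) (hzero' : ∀ x y, d' x y = 0 ↔ x = y)
    (htri' : ∀ x y z, d' x z ≤ d' x y + d' y z)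
    (e : X ≃ X') (he : ∀ x y, d' (e x) (e y) = d x y)
    (ξ η : X → ℝ)
    (hξ : ∃ z : ℕ → X,
      ∀ x, Filter.Tendsto (fun n => d x (z n) - d b (z n)) Filter.atTop (nhds (ξ x)))
    (hη : ∃ z : ℕ → X,
      ∀ x, Filter.Tendsto (fun n => d x (z n) - d b (z n)) Filter.atTop (nhds (η x))) :
    detourCost d' b' (fun x' => ξ (e.symm x') - ξ (e.symm b'))
        (fun x' => η (e.symm x') - η (e.symm b'))
      = (ξ (e.symm b') : EReal) + detourCost d b ξ η - (η (e.symm b') : EReal) ∧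
    detourMetric d' b' (fun x' => ξ (e.symm x') - ξ (e.symm b'))
        (fun x' => η (e.symm x') - η (e.symm b'))
      = detourMetric d b ξ η := by
  have hξb : ξ b = 0 := by
    obtain ⟨z, hz⟩ := hξ
    have h0 : Filter.Tendsto (fun _ : ℕ => (0 : ℝ)) Filter.atTop (nhds (ξ b)) := by
      simpa using hz b
    exact tendsto_nhds_unique h0 tendsto_const_nhds
  have hηb : η b = 0 := by
    obtain ⟨z, hz⟩ := hη
    have h0 : Filter.Tendsto (fun _ : ℕ => (0 : ℝ)) Filter.atTop (nhds (η b)) := by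
      simpa using hz b
    exact tendsto_nhds_unique h0 tendsto_const_nhds
  have h1 := detourCost_isometry_aux d d' b b' e he ξ η hξb
  have h2 := detourCost_isometry_aux d d' b b' e he η ξ hηb
  constructor
  · rw [h1, EReal.coe_sub, sub_eq_add_neg, sub_eq_add_neg, ← add_assoc,
      add_comm (detourCost d b ξ η)]
  · rw [detourMetric, detourMetric, h1, h2, add_add_add_comm, ← EReal.coe_add]
    have hz0 : ξ (e.symm b') - η (e.symm b') + (η (e.symm b') - ξ (e.symm b')) = 0 := by ring
    rw [hz0, EReal.coe_zero, add_zero]
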